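/- For every r ∈ ℂ, the subspace of U_0^{osp}(r) spanned by {E_i : i ∈ ℤ} is invariant under E, H, F and, as an sl(2)-module, is isomorphic to U_{−1,r} via the linear map sending E_i to the basis vector E_i of U_{−1,r}; and the subspace spanned by {E_{i−1/2} : i ∈ ℤ} is invariant under E, H, F and, as an sl(2)-module, is isomorphic to U_{0,r} via the linear map sending E_{i−1/2} to the basis vector E_i of U_{0,r}. Thus as an sl(2)-module U_0^{osp}(r) ≅ U_{−1,r} ⊕ U_{0,r}. -/
import Mathlib


/-!
The sl(2)-module `U_{μ,r}`: underlying space `ℤ →₀ ℂ` with basis `E i = single i 1`,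
and the `osp(1|2)`-module `U_0^{osp}(r)`: underlying space `(ℤ ⊕ ℤ) →₀ ℂ`, where
`Sum.inl i` encodes the basis vector `E_i` and `Sum.inr i` encodes `E_{i−1/2}`.
-/

/-- `e·E_i = E_{i−1}`. -/
noncomputable def eU : Module.End ℂ (ℤ →₀ ℂ) :=
  Finsupp.lift (ℤ →₀ ℂ) ℂ ℤ fun i => Finsupp.single (i - 1) 1

/-- `h·E_i = −(2r+2i−μ)·E_i`. -/
noncomputable def hU (μ r : ℂ) : Module.End ℂ (ℤ →₀ ℂ) :=
  Finsupp.lift (ℤ →₀ ℂ) ℂ ℤ fun i =>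
    (-(2 * r + 2 * (i : ℂ) - μ)) • Finsupp.single i 1

/-- `f·E_i = −(r+i+1)(r+i−μ)·E_{i+1}`. -/
noncomputable def fU (μ r : ℂ) : Module.End ℂ (ℤ →₀ ℂ) :=
  Finsupp.lift (ℤ →₀ ℂ) ℂ ℤ fun i =>
    (-((r + (i : ℂ) + 1) * (r + (i : ℂ) - μ))) • Finsupp.single (i + 1) 1

/-- `E·E_i = E_{i−1}`, `E·E_{i−1/2} = E_{i−3/2}`. -/
noncomputable def Eosp : Module.End ℂ ((ℤ ⊕ ℤ) →₀ ℂ) :=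
  Finsupp.lift ((ℤ ⊕ ℤ) →₀ ℂ) ℂ (ℤ ⊕ ℤ)
    (Sum.elim (fun i => Finsupp.single (Sum.inl (i - 1)) 1)
              (fun i => Finsupp.single (Sum.inr (i - 1)) 1))

/-- `H·E_i = −(2i+2r+1)·E_i`, `H·E_{i−1/2} = −(2i+2r)·E_{i−1/2}`. -/
noncomputable def Hosp (r : ℂ) : Module.End ℂ ((ℤ ⊕ ℤ) →₀ ℂ) :=
  Finsupp.lift ((ℤ ⊕ ℤ) →₀ ℂ) ℂ (ℤ ⊕ ℤ)
    (Sum.elim (fun i => (-(2 * (i : ℂ) + 2 * r + 1)) • Finsupp.single (Sum.inl i) 1)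
              (fun i => (-(2 * (i : ℂ) + 2 * r)) • Finsupp.single (Sum.inr i) 1))

/-- `F·E_i = −(r+i+1)²·E_{i+1}`, `F·E_{i−1/2} = −(r+i+1)(r+i)·E_{i+1/2}`. -/
noncomputable def Fosp (r : ℂ) : Module.End ℂ ((ℤ ⊕ ℤ) →₀ ℂ) :=
  Finsupp.lift ((ℤ ⊕ ℤ) →₀ ℂ) ℂ (ℤ ⊕ ℤ)
    (Sum.elim
      (fun i => (-((r + (i : ℂ) + 1) ^ 2)) • Finsupp.single (Sum.inl (i + 1)) 1)
      (fun i => (-((r + (i : ℂ) + 1) * (r + (i : ℂ)))) • Finsupp.single (Sum.inr (i + 1)) 1))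

/-- `X·E_i = E_{i−1/2}`, `X·E_{i−1/2} = E_{i−1}`. -/
noncomputable def Xosp : Module.End ℂ ((ℤ ⊕ ℤ) →₀ ℂ) :=
  Finsupp.lift ((ℤ ⊕ ℤ) →₀ ℂ) ℂ (ℤ ⊕ ℤ)
    (Sum.elim (fun i => Finsupp.single (Sum.inr i) 1)
              (fun i => Finsupp.single (Sum.inl (i - 1)) 1))

/-- `Y·E_i = −(r+i+1)·E_{i+1/2}`, `Y·E_{i−1/2} = −(r+i)·E_i`. -/
noncomputable def Yosp (r : ℂ) : Module.End ℂ ((ℤ ⊕ ℤ) →₀ ℂ) :=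
  Finsupp.lift ((ℤ ⊕ ℤ) →₀ ℂ) ℂ (ℤ ⊕ ℤ)
    (Sum.elim (fun i => (-(r + (i : ℂ) + 1)) • Finsupp.single (Sum.inr (i + 1)) 1)
              (fun i => (-(r + (i : ℂ))) • Finsupp.single (Sum.inl i) 1))


/-- The subspace of `U_0^{osp}(r)` spanned by the integer-indexed basis `{E_i}`. -/
noncomputable def Wint : Submodule ℂ ((ℤ ⊕ ℤ) →₀ ℂ) :=
  Submodule.span ℂ
    (Set.range fun i : ℤ => (Finsupp.single (Sum.inl i : ℤ ⊕ ℤ) 1 : (ℤ ⊕ ℤ) →₀ ℂ))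

/-- The subspace of `U_0^{osp}(r)` spanned by the half-integer-indexed basis `{E_{i−1/2}}`. -/
noncomputable def Whalf : Submodule ℂ ((ℤ ⊕ ℤ) →₀ ℂ) :=
  Submodule.span ℂ
    (Set.range fun i : ℤ => (Finsupp.single (Sum.inr i : ℤ ⊕ ℤ) 1 : (ℤ ⊕ ℤ) →₀ ℂ))

/-- The linear map sending `E_i ↦ E_i` and `E_{i−1/2} ↦ 0`. -/
noncomputable def Tint : ((ℤ ⊕ ℤ) →₀ ℂ) →ₗ[ℂ] (ℤ →₀ ℂ) :=
  Finsupp.lift (ℤ →₀ ℂ) ℂ (ℤ ⊕ ℤ)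
    (Sum.elim (fun i => Finsupp.single i 1) (fun _ => 0))

/-- The linear map sending `E_{i−1/2} ↦ E_i` and `E_i ↦ 0`. -/
noncomputable def Thalf : ((ℤ ⊕ ℤ) →₀ ℂ) →ₗ[ℂ] (ℤ →₀ ℂ) :=
  Finsupp.lift (ℤ →₀ ℂ) ℂ (ℤ ⊕ ℤ)
    (Sum.elim (fun _ => 0) (fun i => Finsupp.single i 1))



noncomputable def Jint : (ℤ →₀ ℂ) →ₗ[ℂ] ((ℤ ⊕ ℤ) →₀ ℂ) := Finsupp.lmapDomain ℂ ℂ Sum.inl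
noncomputable def Jhalf : (ℤ →₀ ℂ) →ₗ[ℂ] ((ℤ ⊕ ℤ) →₀ ℂ) := Finsupp.lmapDomain ℂ ℂ Sum.inr

lemma lift_single {X M : Type*} [AddCommMonoid M] [Module ℂ M] (f : X → M) (x : X) (c : ℂ) :
    (Finsupp.lift M ℂ X f) (Finsupp.single x c) = c • f x := by
  rw [Finsupp.lift_apply]
  exact Finsupp.sum_single_index (zero_smul ℂ _)

lemma Jint_single (i : ℤ) (c : ℂ) :
    Jint (Finsupp.single i c) = Finsupp.single (Sum.inl i) c := by
  rw [Jint, Finsupp.lmapDomain_apply, Finsupp.mapDomain_single]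

lemma Jhalf_single (i : ℤ) (c : ℂ) :
    Jhalf (Finsupp.single i c) = Finsupp.single (Sum.inr i) c := by
  rw [Jhalf, Finsupp.lmapDomain_apply, Finsupp.mapDomain_single]

lemma top_eq_span : (⊤ : Submodule ℂ (ℤ →₀ ℂ)) =
    Submodule.span ℂ (Set.range fun i : ℤ => (Finsupp.single i 1 : ℤ →₀ ℂ)) := by
  rw [← Finsupp.supported_univ (M := ℂ) (R := ℂ), Finsupp.supported_eq_span_single,
    Set.image_univ]

lemma Wint_eq : Wint = LinearMap.range Jint := by
  rw [Wint, LinearMap.range_eq_map, top_eq_span, Submodule.map_span, ← Set.range_comp]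
  have h : (⇑Jint ∘ fun i : ℤ => Finsupp.single i (1 : ℂ))
      = fun i : ℤ => (Finsupp.single (Sum.inl i : ℤ ⊕ ℤ) 1 : (ℤ ⊕ ℤ) →₀ ℂ) :=
    funext fun i => Jint_single i 1
  rw [h]

lemma Whalf_eq : Whalf = LinearMap.range Jhalf := by
  rw [Whalf, LinearMap.range_eq_map, top_eq_span, Submodule.map_span, ← Set.range_comp]
  have h : (⇑Jhalf ∘ fun i : ℤ => Finsupp.single i (1 : ℂ))
      = fun i : ℤ => (Finsupp.single (Sum.inr i : ℤ ⊕ ℤ) 1 : (ℤ ⊕ ℤ) →₀ ℂ) :=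
    funext fun i => Jhalf_single i 1
  rw [h]

lemma Tint_Jint : Tint.comp Jint = LinearMap.id := by
  apply Finsupp.lhom_ext
  intro i c
  rw [LinearMap.comp_apply, LinearMap.id_apply, Jint_single, Tint, lift_single,
    Sum.elim_inl, Finsupp.smul_single, smul_eq_mul, mul_one]

lemma Thalf_Jhalf : Thalf.comp Jhalf = LinearMap.id := by
  apply Finsupp.lhom_ext
  intro i c
  rw [LinearMap.comp_apply, LinearMap.id_apply, Jhalf_single, Thalf, lift_single,
    Sum.elim_inr, Finsupp.smul_single, smul_eq_mul, mul_one]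

lemma Eosp_Jint : Eosp.comp Jint = Jint.comp eU := by
  apply Finsupp.lhom_ext
  intro i c
  simp only [LinearMap.comp_apply, Jint_single, Eosp, eU, lift_single, Sum.elim_inl,
    map_smul, Finsupp.smul_single, smul_eq_mul, mul_one]

lemma Hosp_Jint (r : ℂ) : (Hosp r).comp Jint = Jint.comp (hU (-1) r) := by
  apply Finsupp.lhom_ext
  intro i c
  simp only [LinearMap.comp_apply, Jint_single, Hosp, hU, lift_single, Sum.elim_inl,
    map_smul, smul_smul, Finsupp.smul_single, smul_eq_mul, mul_one]
  congr 2
  ring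

lemma Fosp_Jint (r : ℂ) : (Fosp r).comp Jint = Jint.comp (fU (-1) r) := by
  apply Finsupp.lhom_ext
  intro i c
  simp only [LinearMap.comp_apply, Jint_single, Fosp, fU, lift_single, Sum.elim_inl,
    map_smul, smul_smul, Finsupp.smul_single, smul_eq_mul, mul_one]
  congr 2
  ring

lemma Eosp_Jhalf : Eosp.comp Jhalf = Jhalf.comp eU := by
  apply Finsupp.lhom_ext
  intro i c
  simp only [LinearMap.comp_apply, Jhalf_single, Eosp, eU, lift_single, Sum.elim_inr,
    map_smul, Finsupp.smul_single, smul_eq_mul, mul_one]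

lemma Hosp_Jhalf (r : ℂ) : (Hosp r).comp Jhalf = Jhalf.comp (hU 0 r) := by
  apply Finsupp.lhom_ext
  intro i c
  simp only [LinearMap.comp_apply, Jhalf_single, Hosp, hU, lift_single, Sum.elim_inr,
    map_smul, smul_smul, Finsupp.smul_single, smul_eq_mul, mul_one]
  congr 2
  ring

lemma Fosp_Jhalf (r : ℂ) : (Fosp r).comp Jhalf = Jhalf.comp (fU 0 r) := by
  apply Finsupp.lhom_ext
  intro i c
  simp only [LinearMap.comp_apply, Jhalf_single, Fosp, fU, lift_single, Sum.elim_inr,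
    map_smul, smul_smul, Finsupp.smul_single, smul_eq_mul, mul_one]
  congr 2
  ring

lemma Tint_Eosp : Tint.comp Eosp = eU.comp Tint := by
  apply Finsupp.lhom_ext
  rintro (i | i) c <;>
    simp only [LinearMap.comp_apply, Tint, Eosp, eU, lift_single, Sum.elim_inl, Sum.elim_inr,
      map_smul, smul_zero, map_zero, Finsupp.smul_single, smul_eq_mul, mul_one]

lemma Tint_Hosp (r : ℂ) : Tint.comp (Hosp r) = (hU (-1) r).comp Tint := by
  apply Finsupp.lhom_ext
  rintro (i | i) c <;>
    simp only [LinearMap.comp_apply, Tint, Hosp, hU, lift_single, Sum.elim_inl, Sum.elim_inr,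
      map_smul, smul_zero, map_zero, smul_smul, Finsupp.smul_single, smul_eq_mul, mul_one]
  congr 2
  ring

lemma Tint_Fosp (r : ℂ) : Tint.comp (Fosp r) = (fU (-1) r).comp Tint := by
  apply Finsupp.lhom_ext
  rintro (i | i) c <;>
    simp only [LinearMap.comp_apply, Tint, Fosp, fU, lift_single, Sum.elim_inl, Sum.elim_inr,
      map_smul, smul_zero, map_zero, smul_smul, Finsupp.smul_single, smul_eq_mul, mul_one]
  congr 2
  ring

lemma Thalf_Eosp : Thalf.comp Eosp = eU.comp Thalf := by
  apply Finsupp.lhom_ext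
  rintro (i | i) c <;>
    simp only [LinearMap.comp_apply, Thalf, Eosp, eU, lift_single, Sum.elim_inl, Sum.elim_inr,
      map_smul, smul_zero, map_zero, Finsupp.smul_single, smul_eq_mul, mul_one]

lemma Thalf_Hosp (r : ℂ) : Thalf.comp (Hosp r) = (hU 0 r).comp Thalf := by
  apply Finsupp.lhom_ext
  rintro (i | i) c <;>
    simp only [LinearMap.comp_apply, Thalf, Hosp, hU, lift_single, Sum.elim_inl, Sum.elim_inr,
      map_smul, smul_zero, map_zero, smul_smul, Finsupp.smul_single, smul_eq_mul, mul_one]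
  congr 2
  ring

lemma Thalf_Fosp (r : ℂ) : Thalf.comp (Fosp r) = (fU 0 r).comp Thalf := by
  apply Finsupp.lhom_ext
  rintro (i | i) c <;>
    simp only [LinearMap.comp_apply, Thalf, Fosp, fU, lift_single, Sum.elim_inl, Sum.elim_inr,
      map_smul, smul_zero, map_zero, smul_smul, Finsupp.smul_single, smul_eq_mul, mul_one]
  congr 2
  ring

/-- The span of `{E_i}` in `U_0^{osp}(r)` is invariant under `E, H, F` and isomorphic,
as an sl(2)-module, to `U_{−1,r}` via `E_i ↦ E_i`; the span of `{E_{i−1/2}}` is invariant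
under `E, H, F` and isomorphic, as an sl(2)-module, to `U_{0,r}` via `E_{i−1/2} ↦ E_i`.
Together the two subspaces decompose `U_0^{osp}(r)` as a direct sum, so that
`U_0^{osp}(r) ≅ U_{−1,r} ⊕ U_{0,r}` as sl(2)-modules. -/
theorem U0osp_sl2_decomposition (r : ℂ) :
    (∀ v ∈ Wint, Eosp v ∈ Wint ∧ Hosp r v ∈ Wint ∧ Fosp r v ∈ Wint) ∧
    Function.Bijective (Tint.domRestrict Wint) ∧
    (∀ v ∈ Wint,
      Tint (Eosp v) = eU (Tint v) ∧
      Tint (Hosp r v) = hU (-1) r (Tint v) ∧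
      Tint (Fosp r v) = fU (-1) r (Tint v)) ∧
    (∀ v ∈ Whalf, Eosp v ∈ Whalf ∧ Hosp r v ∈ Whalf ∧ Fosp r v ∈ Whalf) ∧
    Function.Bijective (Thalf.domRestrict Whalf) ∧
    (∀ v ∈ Whalf,
      Thalf (Eosp v) = eU (Thalf v) ∧
      Thalf (Hosp r v) = hU 0 r (Thalf v) ∧
      Thalf (Fosp r v) = fU 0 r (Thalf v)) ∧
    Wint ⊔ Whalf = ⊤ ∧ Wint ⊓ Whalf = ⊥ := by
  have hTJi := Tint_Jint
  have hTJh := Thalf_Jhalf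
  have invWint : ∀ v ∈ Wint, Eosp v ∈ Wint ∧ Hosp r v ∈ Wint ∧ Fosp r v ∈ Wint := by
    intro v hv
    rw [Wint_eq] at hv ⊢
    obtain ⟨w, rfl⟩ := hv
    refine ⟨⟨eU w, ?_⟩, ⟨hU (-1) r w, ?_⟩, ⟨fU (-1) r w, ?_⟩⟩
    · exact (LinearMap.congr_fun Eosp_Jint w).symm
    · exact (LinearMap.congr_fun (Hosp_Jint r) w).symm
    · exact (LinearMap.congr_fun (Fosp_Jint r) w).symm
  have invWhalf : ∀ v ∈ Whalf, Eosp v ∈ Whalf ∧ Hosp r v ∈ Whalf ∧ Fosp r v ∈ Whalf := by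
    intro v hv
    rw [Whalf_eq] at hv ⊢
    obtain ⟨w, rfl⟩ := hv
    refine ⟨⟨eU w, ?_⟩, ⟨hU 0 r w, ?_⟩, ⟨fU 0 r w, ?_⟩⟩
    · exact (LinearMap.congr_fun Eosp_Jhalf w).symm
    · exact (LinearMap.congr_fun (Hosp_Jhalf r) w).symm
    · exact (LinearMap.congr_fun (Fosp_Jhalf r) w).symm
  have bijint : Function.Bijective (Tint.domRestrict Wint) := by
    constructor
    · rintro ⟨v, hv⟩ ⟨v', hv'⟩ h
      rw [Wint_eq] at hv hv'
      obtain ⟨w, rfl⟩ := hv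
      obtain ⟨w', rfl⟩ := hv'
      simp only [LinearMap.domRestrict_apply] at h
      have h1 : Tint (Jint w) = w := LinearMap.congr_fun hTJi w
      have h2 : Tint (Jint w') = w' := LinearMap.congr_fun hTJi w'
      have hw : w = w' := by rw [← h1, ← h2, h]
      exact Subtype.ext (congrArg (⇑Jint) hw)
    · intro w
      refine ⟨⟨Jint w, by rw [Wint_eq]; exact ⟨w, rfl⟩⟩, ?_⟩
      exact LinearMap.congr_fun hTJi w
  have bijhalf : Function.Bijective (Thalf.domRestrict Whalf) := by
    constructor
    · rintro ⟨v, hv⟩ ⟨v', hv'⟩ h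
      rw [Whalf_eq] at hv hv'
      obtain ⟨w, rfl⟩ := hv
      obtain ⟨w', rfl⟩ := hv'
      simp only [LinearMap.domRestrict_apply] at h
      have h1 : Thalf (Jhalf w) = w := LinearMap.congr_fun hTJh w
      have h2 : Thalf (Jhalf w') = w' := LinearMap.congr_fun hTJh w'
      have hw : w = w' := by rw [← h1, ← h2, h]
      exact Subtype.ext (congrArg (⇑Jhalf) hw)
    · intro w
      refine ⟨⟨Jhalf w, by rw [Whalf_eq]; exact ⟨w, rfl⟩⟩, ?_⟩
      exact LinearMap.congr_fun hTJh w
  refine ⟨invWint, bijint, ?_, invWhalf, bijhalf, ?_, ?_, ?_⟩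
  · intro v _
    exact ⟨LinearMap.congr_fun Tint_Eosp v, LinearMap.congr_fun (Tint_Hosp r) v,
      LinearMap.congr_fun (Tint_Fosp r) v⟩
  · intro v _
    exact ⟨LinearMap.congr_fun Thalf_Eosp v, LinearMap.congr_fun (Thalf_Hosp r) v,
      LinearMap.congr_fun (Thalf_Fosp r) v⟩
  · rw [eq_top_iff, ← Finsupp.supported_univ (M := ℂ) (R := ℂ),
      Finsupp.supported_eq_span_single, Set.image_univ, Submodule.span_le]
    rintro _ ⟨(i | i), rfl⟩
    · exact Submodule.mem_sup_left (Submodule.subset_span ⟨i, rfl⟩)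
    · exact Submodule.mem_sup_right (Submodule.subset_span ⟨i, rfl⟩)
  · rw [eq_bot_iff]
    intro v hv
    rw [Submodule.mem_inf] at hv
    obtain ⟨hv1, hv2⟩ := hv
    rw [Wint_eq] at hv1
    obtain ⟨w, rfl⟩ := hv1
    have hker : Tint (Jint w) = 0 := by
      have key : ∀ u ∈ Whalf, Tint u = 0 := by
        intro u hu
        refine Submodule.span_induction ?_ (map_zero _) ?_ ?_ hu
        · rintro _ ⟨i, rfl⟩
          rw [Tint, lift_single, Sum.elim_inr, smul_zero]
        · intro x y _ _ hx hy
          rw [map_add, hx, hy, add_zero]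
        · intro c x _ hx
          rw [map_smul, hx, smul_zero]
      exact key _ hv2
    have h1 : Tint (Jint w) = w := LinearMap.congr_fun hTJi w
    have hw : w = 0 := h1.symm.trans hker
    rw [hw, map_zero]
    exact Submodule.zero_mem ⊥
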